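/- Let I ⊆ ℝ be an open interval, b, c, f₂ : ℝ → ℝ with c(x) ≠ 0 and f₂(x) + b(x)² ≥ 0 for all x ∈ I, and let ε ∈ {1, −1}. Suppose y_p(x) = ( −b(x) + ε·√(f₂(x) + b(x)²) ) / (2c(x)) is differentiable on I, and define a(x) = y_p'(x) − f₂(x)/(4c(x)). Let S be differentiable on I with S'(x) = ε·√(f₂(x) + b(x)²), and G differentiable on I with G'(x) = c(x)·exp(S(x)). Then for every constant C ∈ ℝ, the function y(x) = y_p(x) + exp(S(x))/(C − G(x)) satisfies y'(x) = a(x) + b(x)y(x) + c(x)y(x)² at every x ∈ I with C − G(x) ≠ 0. -/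

import Mathlib

/-- Theorem 2 (Case 2): with `y_p = (−b + ε√(f₂ + b²))/(2c)` differentiable,
`a = y_p' − f₂/(4c)`, `S' = ε√(f₂ + b²)` and `G' = c · exp S`, the function
`y = y_p + exp S / (C − G)` solves the Riccati equation wherever `C − G ≠ 0`. -/
theorem riccati_case2_general
    (p q : ℝ) (a b c f₂ S G : ℝ → ℝ) (ε : ℝ) (hε : ε = 1 ∨ ε = -1)
    (hc : ∀ x ∈ Set.Ioo p q, c x ≠ 0)
    (hnonneg : ∀ x ∈ Set.Ioo p q, f₂ x + b x ^ 2 ≥ 0)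
    (d : ℝ → ℝ)
    (hyp : ∀ x ∈ Set.Ioo p q,
      HasDerivAt (fun t => (-b t + ε * Real.sqrt (f₂ t + b t ^ 2)) / (2 * c t))
        (d x) x)
    (ha : ∀ x ∈ Set.Ioo p q, a x = d x - f₂ x / (4 * c x))
    (hS : ∀ x ∈ Set.Ioo p q,
      HasDerivAt S (ε * Real.sqrt (f₂ x + b x ^ 2)) x)
    (hG : ∀ x ∈ Set.Ioo p q, HasDerivAt G (c x * Real.exp (S x)) x)
    (C : ℝ) :
    ∀ x ∈ Set.Ioo p q, C - G x ≠ 0 →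
      HasDerivAt (fun t =>
          (-b t + ε * Real.sqrt (f₂ t + b t ^ 2)) / (2 * c t)
            + Real.exp (S t) / (C - G t))
        (a x + b x * ((-b x + ε * Real.sqrt (f₂ x + b x ^ 2)) / (2 * c x)
            + Real.exp (S x) / (C - G x))
          + c x * ((-b x + ε * Real.sqrt (f₂ x + b x ^ 2)) / (2 * c x)
            + Real.exp (S x) / (C - G x)) ^ 2) x := by
  intro x hx hCG
  have hcx := hc x hx
  have hsq : Real.sqrt (f₂ x + b x ^ 2) ^ 2 = f₂ x + b x ^ 2 :=
    Real.sq_sqrt (hnonneg x hx)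
  have hε2 : ε ^ 2 = 1 := by rcases hε with h | h <;> simp [h]
  have hu : HasDerivAt (fun t => Real.exp (S t) / (C - G t))
      ((Real.exp (S x) * (ε * Real.sqrt (f₂ x + b x ^ 2)) * (C - G x)
        - Real.exp (S x) * (0 - c x * Real.exp (S x))) / (C - G x) ^ 2) x :=
    ((hS x hx).exp).div ((hasDerivAt_const x C).sub (hG x hx)) hCG
  have h := (hyp x hx).add hu
  convert h using 1
  case e'_4 => rfl
  case e'_5 => rfl
  case e'_8 => rfl
  rw [ha x hx]
  field_simp
  ring_nf
  rw [hε2, hsq]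
  ring
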